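/- Let Q be positive definite n×n, A an n×n matrix, and let Π and P be positive definite n×n matrices with Π ⪯ P. Then Q⁻¹ − Q⁻¹ A (Π + Aᵀ Q⁻¹ A)⁻¹ Aᵀ Q⁻¹ ⪯ Q⁻¹ − Q⁻¹ A (P + Aᵀ Q⁻¹ A)⁻¹ Aᵀ Q⁻¹. -/

import Mathlib

open Matrix

lemma dot_sym {n : Type*} [Fintype n] {C : Matrix n n ℝ} (hC : C.IsHermitian)
    (u v : n → ℝ) : u ⬝ᵥ (C *ᵥ v) = v ⬝ᵥ (C *ᵥ u) := by
  rw [dotProduct_mulVec, dotProduct_comm, ← mulVec_transpose]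
  have : Cᵀ = C := by simpa [Matrix.IsHermitian, conjTranspose_eq_transpose_of_trivial] using hC
  rw [this]

lemma inv_antitone {n : Type*} [Fintype n] [DecidableEq n] {B C : Matrix n n ℝ}
    (hB : B.PosDef) (hC : C.PosDef) (h : (B - C).PosSemidef) :
    (C⁻¹ - B⁻¹).PosSemidef := by
  have hBinv := hB.inv
  have hCinv := hC.inv
  refine PosSemidef.of_dotProduct_mulVec_nonneg (hCinv.isHermitian.sub hBinv.isHermitian) fun x => ?_
  have hBx : B *ᵥ (B⁻¹ *ᵥ x) = x := by
    rw [mulVec_mulVec, Matrix.mul_nonsing_inv _ (isUnit_iff_ne_zero.mpr hB.det_pos.ne'),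
      one_mulVec]
  have hCx : C *ᵥ (C⁻¹ *ᵥ x) = x := by
    rw [mulVec_mulVec, Matrix.mul_nonsing_inv _ (isUnit_iff_ne_zero.mpr hC.det_pos.ne'),
      one_mulVec]
  set y := B⁻¹ *ᵥ x with hy
  set w := C⁻¹ *ᵥ x with hw
  have key : star x ⬝ᵥ ((C⁻¹ - B⁻¹) *ᵥ x)
      = (w - y) ⬝ᵥ (C *ᵥ (w - y)) + y ⬝ᵥ ((B - C) *ᵥ y) := by
    have e1 : w ⬝ᵥ (C *ᵥ w) = x ⬝ᵥ w := by rw [dot_sym hC.isHermitian, hCx, dotProduct_comm]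
    have e2 : w ⬝ᵥ (C *ᵥ y) = x ⬝ᵥ y := by
      rw [dot_sym hC.isHermitian, hCx, dotProduct_comm]
    have e3 : y ⬝ᵥ (C *ᵥ w) = x ⬝ᵥ y := by rw [hCx, dotProduct_comm]
    have e4 : y ⬝ᵥ (B *ᵥ y) = x ⬝ᵥ y := by rw [hBx, dotProduct_comm]
    simp only [star_trivial, sub_mulVec, mulVec_sub, dotProduct_sub, sub_dotProduct,
      e1, e2, e3, e4]
    ring
  rw [key]
  have t1 := hC.posSemidef.dotProduct_mulVec_nonneg (w - y)
  have t2 := h.dotProduct_mulVec_nonneg y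
  simp only [star_trivial] at t1 t2 ⊢
  linarith

theorem riccati_map_monotone {n : Type*} [Fintype n] [DecidableEq n]
    (Q A Pi P : Matrix n n ℝ) (hQ : Q.PosDef) (hPi : Pi.PosDef) (hP : P.PosDef)
    (hle : (P - Pi).PosSemidef) :
    ((Q⁻¹ - Q⁻¹ * A * (P + Aᵀ * Q⁻¹ * A)⁻¹ * Aᵀ * Q⁻¹) -
      (Q⁻¹ - Q⁻¹ * A * (Pi + Aᵀ * Q⁻¹ * A)⁻¹ * Aᵀ * Q⁻¹)).PosSemidef := by
  have hQinv := hQ.inv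
  have hM : (Aᵀ * Q⁻¹ * A).PosSemidef := by
    have := hQinv.posSemidef.conjTranspose_mul_mul_same A
    simpa [conjTranspose_eq_transpose_of_trivial, Matrix.mul_assoc] using this
  have hPM : (P + Aᵀ * Q⁻¹ * A).PosDef := hP.add_posSemidef hM
  have hPiM : (Pi + Aᵀ * Q⁻¹ * A).PosDef := hPi.add_posSemidef hM
  have hdiff : ((P + Aᵀ * Q⁻¹ * A) - (Pi + Aᵀ * Q⁻¹ * A)).PosSemidef := by
    simpa using hle
  have hinv := inv_antitone hPM hPiM hdiff
  have hconj := hinv.mul_mul_conjTranspose_same (Q⁻¹ * A)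
  have hQsym : Q⁻¹ᵀ = Q⁻¹ := by
    have := hQinv.isHermitian
    simpa [Matrix.IsHermitian, conjTranspose_eq_transpose_of_trivial] using this
  have heq : (Q⁻¹ * A) * ((Pi + Aᵀ * Q⁻¹ * A)⁻¹ - (P + Aᵀ * Q⁻¹ * A)⁻¹) * (Q⁻¹ * A)ᴴ
      = ((Q⁻¹ - Q⁻¹ * A * (P + Aᵀ * Q⁻¹ * A)⁻¹ * Aᵀ * Q⁻¹) -
      (Q⁻¹ - Q⁻¹ * A * (Pi + Aᵀ * Q⁻¹ * A)⁻¹ * Aᵀ * Q⁻¹)) := by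
    have : (Q⁻¹ * A)ᴴ = Aᵀ * Q⁻¹ := by
      simp [conjTranspose, transpose_mul, hQsym, Matrix.map_id]
      ext i j; simp [transpose_apply, Matrix.mul_apply]
    rw [this]
    noncomm_ring
  rw [← heq]
  exact hconj
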